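/- Let m > 1 be a real number, n ≥ 1 a natural number, and let λ, μ, r, p, u be real numbers with λ > 0, u > 0 and p ≥ 0. Suppose r + (m+n−1)(m+n−2)·p/u² + (m+n−2)·λ/u² = (m+2n−2)·μ and p + λ/(m+n−1) < (μ/(m−1))·u². Then −(n(n−1)/(m−1))·μ < r ≤ (m+2n−2)·μ. (This is the algebraic derivation of Corollary 4.37 of the paper: for a compact quasi-Einstein smooth metric measure space (Mⁿ,g,u^{2−m−n}dvol) with m > 1, quasi-Einstein constant μ and characteristic constant λ > 0, the trace identity (4.13) together with the gradient estimate (4.12) yields the two-sided scalar curvature bound −n(n−1)μ/(m−1) < R ≤ (m+2n−2)μ; here r = R and p = |∇u|² at a point.) -/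

import Mathlib

/-- The algebraic derivation of Corollary 4.37 of the paper: if `m > 1`, `λ > 0`,
`u > 0`, `p ≥ 0`, `r + (m+n−1)(m+n−2)p/u² + (m+n−2)λ/u² = (m+2n−2)μ` and
`p + λ/(m+n−1) < (μ/(m−1))u²`, then `−(n(n−1)/(m−1))μ < r ≤ (m+2n−2)μ`. -/
theorem scalar_curvature_bounds (m : ℝ) (hm : 1 < m) (n : ℕ) (hn : 1 ≤ n)
    (lam mu r p u : ℝ) (hlam : 0 < lam) (hu : 0 < u) (hp : 0 ≤ p)
    (htrace : r + (m + n - 1) * (m + n - 2) * p / u ^ 2 + (m + n - 2) * lam / u ^ 2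
      = (m + 2 * n - 2) * mu)
    (hgrad : p + lam / (m + n - 1) < (mu / (m - 1)) * u ^ 2) :
    -((n : ℝ) * (n - 1) / (m - 1)) * mu < r ∧ r ≤ (m + 2 * n - 2) * mu := by
  have hn1 : (1 : ℝ) ≤ (n : ℝ) := by exact_mod_cast hn
  have ha : (0 : ℝ) < m + n - 1 := by linarith
  have hb : (0 : ℝ) < m + n - 2 := by linarith
  have hu2 : (0 : ℝ) < u ^ 2 := by positivity
  have hm1 : (0 : ℝ) < m - 1 := by linarith
  have hr : r = (m + 2 * n - 2) * mu
      - ((m + n - 1) * (m + n - 2) * p + (m + n - 2) * lam) / u ^ 2 := by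
    field_simp at htrace ⊢
    linarith
  constructor
  · -- lower bound
    have hg2 : ((m + n - 1) * p + lam) * (m - 1) < (m + n - 1) * mu * u ^ 2 := by
      have h2 := mul_lt_mul_of_pos_right hgrad (mul_pos ha hm1)
      have e1 : (p + lam / (m + n - 1)) * ((m + n - 1) * (m - 1))
          = ((m + n - 1) * p + lam) * (m - 1) := by
        field_simp
      have e2 : (mu / (m - 1) * u ^ 2) * ((m + n - 1) * (m - 1))
          = (m + n - 1) * mu * u ^ 2 := by
        field_simp
      rw [e1, e2] at h2
      exact h2
    have key : ((m + n - 1) * (m + n - 2) * p + (m + n - 2) * lam) / u ^ 2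
        < (m + n - 1) * (m + n - 2) * mu / (m - 1) := by
      rw [div_lt_div_iff₀ hu2 hm1]
      nlinarith [mul_lt_mul_of_pos_left hg2 hb]
    have e3 : -((n : ℝ) * ((n : ℝ) - 1) / (m - 1)) * mu
        = (m + 2 * n - 2) * mu - (m + n - 1) * (m + n - 2) * mu / (m - 1) := by
      field_simp; ring
    rw [hr]
    linarith [key, e3.le, e3.ge]
  · rw [hr]
    have : 0 ≤ ((m + n - 1) * (m + n - 2) * p + (m + n - 2) * lam) / u ^ 2 := by
      positivity
    linarith
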